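/- arXiv:1611.04771 — 3 statements merged into one kernel-verified Lean document; each statement's English description precedes it below -/
import Mathlib

section
/- Let H be a real Hilbert space, S : H → H a bounded self-adjoint operator, ψ, w ∈ H unit vectors with ⟨w,ψ⟩ = 0 and Sψ = 0. Suppose there is c₅ > 0 such that ⟨Sz,z⟩ ≥ c₅‖z‖² for all z ⊥ ψ with z ⊥ w. Then there exist σ > 0 and c₆ > 0 such that for all v ⊥ ψ: ⟨Sv,v⟩ + 2σ⟨w,v⟩² ≥ c₆‖v‖². -/
open RealInnerProductSpace

set_option maxHeartbeats 1000000 in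
/-- coercivity of the augmented quadratic form
`⟪Sv,v⟫ + 2σ⟪w,v⟫²` on the orthogonal complement of `ψ`. -/
theorem stmt2 {H : Type*} [NormedAddCommGroup H] [InnerProductSpace ℝ H] [CompleteSpace H]
    (S : H →L[ℝ] H) (hsa : ∀ x y : H, ⟪S x, y⟫ = ⟪x, S y⟫)
    (ψ w : H) (hψ : ‖ψ‖ = 1) (hSψ : S ψ = 0) (hw : ‖w‖ = 1) (hwψ : ⟪w, ψ⟫ = 0)
    (c₅ : ℝ) (hc₅ : 0 < c₅)
    (hcoer : ∀ z : H, ⟪z, ψ⟫ = 0 → ⟪z, w⟫ = 0 → ⟪S z, z⟫ ≥ c₅ * ‖z‖ ^ 2) :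
    ∃ σ > (0 : ℝ), ∃ c₆ > (0 : ℝ), ∀ v : H, ⟪v, ψ⟫ = 0 →
      ⟪S v, v⟫ + 2 * σ * ⟪w, v⟫ ^ 2 ≥ c₆ * ‖v‖ ^ 2 := by
  set σ : ℝ := (c₅ + 4) / 4 + ‖S w‖ ^ 2 / c₅ + |⟪S w, w⟫| / 2 with hσdef
  have hσpos : 0 < σ := by rw [hσdef]; positivity
  refine ⟨σ, hσpos, c₅ / 2, by linarith, fun v hvψ => ?_⟩
  set α : ℝ := ⟪w, v⟫ with hα
  set z : H := v - α • w with hz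
  have hvdecomp : v = α • w + z := by simp [hz]
  have hzψ : ⟪z, ψ⟫ = 0 := by
    simp [hz, inner_sub_left, inner_smul_left, hvψ, hwψ]
  have hww : ⟪w, w⟫ = (1:ℝ) := by
    rw [real_inner_self_eq_norm_sq, hw]; norm_num
  have hzw : ⟪z, w⟫ = 0 := by
    simp only [hz, inner_sub_left, inner_smul_left, hww, starRingEnd_apply, star_trivial,
      mul_one]
    rw [real_inner_comm w v, ← hα, sub_self]
  have hwz : ⟪w, z⟫ = 0 := by rw [real_inner_comm]; exact hzw
  have hcz := hcoer z hzψ hzw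
  have hnorm : ‖v‖ ^ 2 = α ^ 2 + ‖z‖ ^ 2 := by
    rw [hvdecomp, norm_add_sq_real]
    rw [inner_smul_left]
    simp only [RCLike.ofReal_real_eq_id, id_eq, hwz, mul_zero]
    rw [norm_smul, Real.norm_eq_abs, hw]
    simp [sq_abs, mul_pow]
  have hexp : ⟪S v, v⟫ = α ^ 2 * ⟪S w, w⟫ + 2 * α * ⟪S w, z⟫ + ⟪S z, z⟫ := by
    have hSzw : ⟪S z, w⟫ = ⟪S w, z⟫ := by
      rw [hsa z w, real_inner_comm]
    rw [hvdecomp]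
    simp only [map_add, map_smul, inner_add_left, inner_add_right, inner_smul_left,
      inner_smul_right, RCLike.ofReal_real_eq_id, id_eq, hSzw, starRingEnd_apply,
      star_trivial]
    ring
  have hCS : |⟪S w, z⟫| ≤ ‖S w‖ * ‖z‖ := abs_real_inner_le_norm _ _
  -- key AM-GM bound
  have h1 : α * ⟪S w, z⟫ ≥ -(|α| * (‖S w‖ * ‖z‖)) := by
    calc α * ⟪S w, z⟫ ≥ -|α * ⟪S w, z⟫| := neg_abs_le _
      _ ≥ -(|α| * (‖S w‖ * ‖z‖)) := by
          rw [abs_mul]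
          have := mul_le_mul_of_nonneg_left hCS (abs_nonneg α)
          linarith
  have h2 : (c₅ * ‖z‖ - 2 * |α| * ‖S w‖) ^ 2 ≥ 0 := sq_nonneg _
  have h3 : |α| ^ 2 = α ^ 2 := sq_abs α
  have hkey' : c₅ * (2 * α * ⟪S w, z⟫) ≥ -(c₅ * (c₅ / 2) * ‖z‖ ^ 2 + 2 * α ^ 2 * ‖S w‖ ^ 2) := by
    nlinarith [h1, h2, h3, hc₅, abs_nonneg α, norm_nonneg (S w), norm_nonneg z]
  have hkey : 2 * α * ⟪S w, z⟫ ≥ -((c₅ / 2) * ‖z‖ ^ 2 + (2 / c₅) * α ^ 2 * ‖S w‖ ^ 2) := by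
    have hL : c₅ * (-((c₅ / 2) * ‖z‖ ^ 2 + (2 / c₅) * α ^ 2 * ‖S w‖ ^ 2))
        = -(c₅ * (c₅ / 2) * ‖z‖ ^ 2 + 2 * α ^ 2 * ‖S w‖ ^ 2) := by
      field_simp
    have h4 : c₅ * (-((c₅ / 2) * ‖z‖ ^ 2 + (2 / c₅) * α ^ 2 * ‖S w‖ ^ 2))
        ≤ c₅ * (2 * α * ⟪S w, z⟫) := by rw [hL]; linarith
    exact (mul_le_mul_iff_right₀ hc₅).mp h4
  have hbracket : ⟪S w, w⟫ - (2 / c₅) * ‖S w‖ ^ 2 + 2 * σ ≥ c₅ / 2 := by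
    have hs : 2 * σ = (c₅ + 4) / 2 + 2 * (‖S w‖ ^ 2 / c₅) + |⟪S w, w⟫| := by
      rw [hσdef]; ring
    have habs : ⟪S w, w⟫ + |⟪S w, w⟫| ≥ 0 := by
      have := neg_abs_le ⟪S w, w⟫; linarith
    have hd : (2 / c₅) * ‖S w‖ ^ 2 = 2 * (‖S w‖ ^ 2 / c₅) := by ring
    linarith
  have hα2 : (0:ℝ) ≤ α ^ 2 := sq_nonneg α
  nlinarith [mul_le_mul_of_nonneg_left hbracket hα2, hcz, hkey, hexp, hnorm]
end

section
/- Let L > 0, δ > 0, and define θ(κ) = (2πκ/L)·coth(2πκδ/L) − 1/δ for nonzero integers κ. If κ₀ is a positive integer with δ > L/(κ₀π), then ϑ₀ := 2π/L − 2/(κ₀δ) > 0, and for every 0 < υ₁ < ϑ₀ and every integer κ with |κ| ≥ κ₀, one has υ₁|κ| ≤ θ(κ) ≤ (2π/L)|κ|. -/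
open Real

lemma key_coth_upper (b : ℝ) (hb : 0 < b) :
    b * Real.cosh b ≤ (b + 1) * Real.sinh b := by
  have h1 : Real.cosh b - Real.sinh b = Real.exp (-b) := Real.cosh_sub_sinh b
  have h2 : Real.exp (-b) ≤ 1 := Real.exp_le_one_iff.mpr (by linarith)
  have h3 : b ≤ Real.sinh b := Real.self_le_sinh_iff.mpr hb.le
  nlinarith

/-- bounds on the Fourier symbol
`θ(κ) = (2πκ/L) coth(2πκδ/L) − 1/δ` of the ILW dispersion operator. -/
theorem stmt7 (L δ : ℝ) (hL : 0 < L) (hδ : 0 < δ) (κ₀ : ℤ) (hκ₀ : 0 < κ₀)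
    (hδL : δ > L / (κ₀ * π))
    (θ : ℤ → ℝ)
    (hθ : ∀ κ : ℤ, κ ≠ 0 →
      θ κ = (2 * π * κ / L) * (Real.cosh (2 * π * κ * δ / L) / Real.sinh (2 * π * κ * δ / L))
        - 1 / δ) :
    0 < 2 * π / L - 2 / (κ₀ * δ) ∧
      ∀ υ₁ : ℝ, 0 < υ₁ → υ₁ < 2 * π / L - 2 / (κ₀ * δ) →
        ∀ κ : ℤ, κ₀ ≤ |κ| →
          υ₁ * |(κ : ℝ)| ≤ θ κ ∧ θ κ ≤ (2 * π / L) * |(κ : ℝ)| := by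
  have hπ : 0 < π := Real.pi_pos
  have hk0 : (0:ℝ) < (κ₀ : ℝ) := by exact_mod_cast hκ₀
  have hLpos : L < δ * ((κ₀:ℝ) * π) := (div_lt_iff₀ (by positivity)).mp hδL
  have hpos : 0 < 2 * π / L - 2 / (κ₀ * δ) := by
    rw [sub_pos, div_lt_div_iff₀ (by positivity) hL]
    nlinarith
  refine ⟨hpos, fun υ₁ hυ₁ hυ₁' κ hκ => ?_⟩
  have hκne : κ ≠ 0 := by
    intro h; rw [h] at hκ; simp at hκ; omega
  set c : ℝ := |(κ : ℝ)| with hc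
  have hcκ : (κ₀ : ℝ) ≤ c := by
    rw [hc, ← Int.cast_abs]; exact_mod_cast hκ
  have hcpos : 0 < c := lt_of_lt_of_le hk0 hcκ
  set x : ℝ := 2 * π * c * δ / L with hx
  have hxpos : 0 < x := by positivity
  have hsinh : 0 < Real.sinh x := Real.sinh_pos_iff.mpr hxpos
  have hθκ : θ κ = (2 * π * c / L) * (Real.cosh x / Real.sinh x) - 1 / δ := by
    rw [hθ κ hκne]
    rcases abs_cases ((κ : ℝ)) with ⟨h, _⟩ | ⟨h, _⟩
    · rw [hx, hc, h]
    · rw [hx, hc, h]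
      rw [show 2 * π * -(κ:ℝ) * δ / L = -(2 * π * (κ:ℝ) * δ / L) by ring,
        Real.cosh_neg, Real.sinh_neg]
      field_simp
  constructor
  · -- lower bound
    have hratio : 1 ≤ Real.cosh x / Real.sinh x :=
      (le_div_iff₀ hsinh).mpr (by simpa using (Real.sinh_lt_cosh x).le)
    have h1 : 2 * π * c / L - 1 / δ ≤ θ κ := by
      rw [hθκ]
      have : 2 * π * c / L * 1 ≤ 2 * π * c / L * (Real.cosh x / Real.sinh x) :=
        mul_le_mul_of_nonneg_left hratio (by positivity)
      linarith
    have h2 : υ₁ * c ≤ 2 * π * c / L - 1 / δ := by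
      have hυc : υ₁ * c ≤ (2 * π / L - 2 / (κ₀ * δ)) * c :=
        mul_le_mul_of_nonneg_right (le_of_lt hυ₁') (le_of_lt hcpos)
      have h3 : 1 / δ ≤ 2 / (κ₀ * δ) * c := by
        rw [div_le_iff₀ hδ] at *
        rw [div_mul_eq_mul_div, div_mul_eq_mul_div, le_div_iff₀ (by positivity)]
        nlinarith
      have e1 : (2 * π / L - 2 / ((κ₀:ℝ) * δ)) * c
          = 2 * π * c / L - 2 / ((κ₀:ℝ) * δ) * c := by ring
      linarith [hυc, h3, e1]
    linarith
  · -- upper bound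
    have hkey := key_coth_upper x hxpos
    rw [hθκ]
    have hr2 : Real.cosh x / Real.sinh x ≤ (x + 1) / x := by
      rw [div_le_div_iff₀ hsinh hxpos]
      nlinarith
    have h1 : (2 * π * c / L) * (Real.cosh x / Real.sinh x)
        ≤ (2 * π * c / L) * ((x + 1) / x) :=
      mul_le_mul_of_nonneg_left hr2 (by positivity)
    have hax : (2 * π * c / L) * ((x + 1) / x) = 2 * π * c / L + 1 / δ := by
      rw [hx]
      field_simp
    have : (2 * π / L) * c = 2 * π * c / L := by ring
    linarith
end

section
/- Let H be a real Hilbert space, L a symmetric bilinear form on a dense subspace D ⊆ H, and suppose H = span{χ} ⊕ span{ψ} ⊕ P orthogonally, with ‖χ‖ = 1, L(χ,v) = −λ₀²⟨χ,v⟩ for all v ∈ D (λ₀ ≠ 0), L(ψ,v) = 0 for all v ∈ D, and L(p,p) ≥ c₈‖p‖² for all p ∈ P ∩ D. Let Φ ∈ D satisfy L(Φ,Φ) < 0, and decompose Φ = a₀χ + b₀ψ + p₀. If φ̃ ∈ D with ‖φ̃‖ = 1, ⟨φ̃, ψ⟩ = 0, L(Φ, φ̃) = 0, and φ̃ = a₁χ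 + p₁ with p₁ ∈ P ∩ D, then a₀a₁λ₀² = L(p₀, p₁), and consequently L(φ̃, φ̃) > 0. -/
open RealInnerProductSpace

/-- with the same spectral decomposition, if `φt ∈ D` is a
unit vector orthogonal to `ψ`, `L(Φ,φt) = 0` and `φt = a₁χ + p₁`, then
`a₀a₁lam₀² = L(p₀,p₁)` and consequently `L(φt,φt) > 0`. -/
theorem stmt11 {H : Type*} [NormedAddCommGroup H] [InnerProductSpace ℝ H] [CompleteSpace H]
    (D : Submodule ℝ H) (hD : Dense (D : Set H))
    (L : H →ₗ[ℝ] H →ₗ[ℝ] ℝ) (hsymm : ∀ v w : H, L v w = L w v)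
    (χ ψ : H) (hχ : ‖χ‖ = 1) (hχψ : ⟪χ, ψ⟫ = 0)
    (P : Submodule ℝ H) (hPχ : ∀ p ∈ P, ⟪χ, p⟫ = 0) (hPψ : ∀ p ∈ P, ⟪ψ, p⟫ = 0)
    (lam₀ : ℝ) (hlam₀ : lam₀ ≠ 0)
    (hLχ : ∀ v ∈ D, L χ v = -lam₀ ^ 2 * ⟪χ, v⟫)
    (hLψ : ∀ v ∈ D, L ψ v = 0)
    (c₈ : ℝ) (hc₈ : 0 < c₈) (hcoer : ∀ p ∈ P ⊓ D, L p p ≥ c₈ * ‖p‖ ^ 2)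
    (Φ : H) (hΦD : Φ ∈ D) (hneg : L Φ Φ < 0)
    (a₀ b₀ : ℝ) (p₀ : H) (hp₀ : p₀ ∈ P ⊓ D) (hΦ : Φ = a₀ • χ + b₀ • ψ + p₀)
    (φt : H) (hφtD : φt ∈ D) (hφt1 : ‖φt‖ = 1) (hφtψ : ⟪φt, ψ⟫ = 0)
    (hLΦφt : L Φ φt = 0)
    (a₁ : ℝ) (p₁ : H) (hp₁ : p₁ ∈ P ⊓ D) (hφt : φt = a₁ • χ + p₁) :
    a₀ * a₁ * lam₀ ^ 2 = L p₀ p₁ ∧ L φt φt > 0 := by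
  obtain ⟨hp₀P, hp₀D⟩ := hp₀
  obtain ⟨hp₁P, hp₁D⟩ := hp₁
  have hχp₀ : ⟪χ, p₀⟫ = 0 := hPχ p₀ hp₀P
  have hχp₁ : ⟪χ, p₁⟫ = 0 := hPχ p₁ hp₁P
  have hχχ : ⟪χ, χ⟫ = (1 : ℝ) := by
    rw [real_inner_self_eq_norm_sq, hχ]; norm_num
  have hlamsq : (0:ℝ) < lam₀ ^ 2 := by positivity
  -- expansions
  have hLχφt : L χ φt = -lam₀ ^ 2 * a₁ := by
    rw [hLχ φt hφtD, hφt]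
    simp [inner_add_right, inner_smul_right, hχχ, hχp₁, hχ]
  have hLp₀φt : L p₀ φt = L p₀ p₁ := by
    rw [hsymm, hφt]
    simp [map_add, map_smul, LinearMap.add_apply, LinearMap.smul_apply,
      hLχ p₀ hp₀D, hχp₀, hsymm p₁ p₀]
  have key : a₀ * a₁ * lam₀ ^ 2 = L p₀ p₁ := by
    have h0 : L Φ φt = -(a₀ * a₁ * lam₀ ^ 2) + L p₀ p₁ := by
      rw [hΦ]
      simp only [map_add, map_smul, LinearMap.add_apply, LinearMap.smul_apply,
        smul_eq_mul, hLψ φt hφtD, hLχφt, hLp₀φt]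
      ring
    rw [hLΦφt] at h0; linarith
  refine ⟨key, ?_⟩
  -- L Φ Φ = -a₀² λ₀² + L p₀ p₀
  have hLχΦ : L χ Φ = -lam₀ ^ 2 * a₀ := by
    rw [hLχ Φ hΦD, hΦ]
    simp [inner_add_right, inner_smul_right, hχχ, hχψ, hχp₀, hχ]
  have hLp₀Φ : L p₀ Φ = L p₀ p₀ := by
    rw [hsymm, hΦ]
    simp [map_add, map_smul, LinearMap.add_apply, LinearMap.smul_apply,
      hLχ p₀ hp₀D, hLψ p₀ hp₀D, hχp₀, hsymm p₀]
  have hΦΦ : L Φ Φ = -(a₀ ^ 2 * lam₀ ^ 2) + L p₀ p₀ := by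
    nth_rewrite 2 [hΦ]
    simp only [map_add, map_smul, smul_eq_mul]
    rw [hsymm Φ χ, hsymm Φ ψ, hsymm Φ p₀, hLχΦ, hLψ Φ hΦD, hLp₀Φ]
    ring
  have hQ0 : L p₀ p₀ < a₀ ^ 2 * lam₀ ^ 2 := by
    rw [hΦΦ] at hneg; linarith
  -- L φt φt = -a₁² λ₀² + L p₁ p₁
  have hLp₁φt : L p₁ φt = L p₁ p₁ := by
    rw [hsymm, hφt]
    simp [map_add, map_smul, LinearMap.add_apply, LinearMap.smul_apply,
      hLχ p₁ hp₁D, hχp₁, hsymm p₁]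
  have hφtφt : L φt φt = -(a₁ ^ 2 * lam₀ ^ 2) + L p₁ p₁ := by
    nth_rewrite 2 [hφt]
    simp only [map_add, map_smul, smul_eq_mul]
    rw [hsymm φt χ, hsymm φt p₁, hLχφt, hLp₁φt]
    ring
  have hp₀nn : (0:ℝ) ≤ L p₀ p₀ := le_trans (by positivity) (hcoer p₀ ⟨hp₀P, hp₀D⟩)
  have hp₁nn : (0:ℝ) ≤ L p₁ p₁ := le_trans (by positivity) (hcoer p₁ ⟨hp₁P, hp₁D⟩)
  -- Cauchy–Schwarz for L on P ⊓ D
  have cs : (L p₀ p₁) ^ 2 ≤ L p₀ p₀ * L p₁ p₁ := by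
    have hq : ∀ t : ℝ, 0 ≤ L p₁ p₁ * (t * t) + (2 * L p₀ p₁) * t + L p₀ p₀ := by
      intro t
      have hmem : p₀ + t • p₁ ∈ P ⊓ D :=
        (P ⊓ D).add_mem ⟨hp₀P, hp₀D⟩ ((P ⊓ D).smul_mem t ⟨hp₁P, hp₁D⟩)
      have h1 : (0:ℝ) ≤ L (p₀ + t • p₁) (p₀ + t • p₁) :=
        le_trans (by positivity) (hcoer _ hmem)
      have h2 : L (p₀ + t • p₁) (p₀ + t • p₁)
          = L p₁ p₁ * (t * t) + (2 * L p₀ p₁) * t + L p₀ p₀ := by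
        simp only [map_add, map_smul, LinearMap.add_apply, LinearMap.smul_apply,
          smul_eq_mul, hsymm p₁ p₀]
        ring
      linarith [h2 ▸ h1]
    have hd := discrim_le_zero hq
    rw [discrim] at hd
    nlinarith [hd]
  rw [hφtφt]
  rcases eq_or_ne a₁ 0 with h1 | h1
  · have hp₁φ : φt = p₁ := by rw [hφt, h1]; simp
    have : L p₁ p₁ ≥ c₈ * ‖p₁‖ ^ 2 := hcoer p₁ ⟨hp₁P, hp₁D⟩
    rw [← hp₁φ, hφt1] at this
    nlinarith
  · have ha₀ : a₀ ≠ 0 := by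
      intro h0
      rw [h0] at hQ0
      simp at hQ0
      linarith
    have ha₀2 : (0:ℝ) < a₀ ^ 2 := by positivity
    have ha₁2 : (0:ℝ) < a₁ ^ 2 := by positivity
    have keysq : (a₀ * a₁ * lam₀ ^ 2) ^ 2 = (L p₀ p₁) ^ 2 := by rw [key]
    have hp₁pos : 0 < L p₁ p₁ := by
      rcases hp₁nn.lt_or_eq with h | h
      · exact h
      · exfalso
        have h2 : (L p₀ p₁) ^ 2 ≤ 0 := by rw [← h] at cs; simpa using cs
        have h3 : (a₀ * a₁ * lam₀ ^ 2) ^ 2 ≤ 0 := by rw [keysq]; exact h2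
        have h4 : (0:ℝ) < (a₀ * a₁ * lam₀ ^ 2) ^ 2 := by positivity
        linarith
    have h5 : L p₀ p₀ * L p₁ p₁ < (a₀ ^ 2 * lam₀ ^ 2) * L p₁ p₁ :=
      mul_lt_mul_of_pos_right hQ0 hp₁pos
    have e : (a₀ * a₁ * lam₀ ^ 2) ^ 2 = a₀ ^ 2 * lam₀ ^ 2 * (a₁ ^ 2 * lam₀ ^ 2) := by ring
    have h6 : a₀ ^ 2 * lam₀ ^ 2 * (a₁ ^ 2 * lam₀ ^ 2) < a₀ ^ 2 * lam₀ ^ 2 * L p₁ p₁ := by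
      linarith [cs, h5, keysq, e.symm.trans keysq]
    have h7 : a₁ ^ 2 * lam₀ ^ 2 < L p₁ p₁ :=
      lt_of_mul_lt_mul_left h6 (mul_pos ha₀2 hlamsq).le
    linarith
end
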